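/- Let k ≥ 1 and r ≥ 2k+1. Let A_1, A_2 be subsets of the degree-3 vertices of the r-wall H_r with |A_1| = |A_2| = 2k². Then there is no set U ⊆ V(H_r) with A_1 ⊆ U, A_2 ⊆ V(H_r) \ U, and |δ(U)| < k. -/

import Mathlib

open Sym2

/-- A finite multigraph: finite vertex and edge types, each edge has an
unordered pair of endpoints, and there are no loops. -/
structure Multigraph where
  V : Type
  E : Type
  finV : Finite V
  finE : Finite E
  ends : E → Sym2 V
  no_loops : ∀ e, ¬ (ends e).IsDiag

attribute [instance] Multigraph.finV Multigraph.finE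

namespace Multigraph

/-- `IsWalk G vs es`: `vs` is the vertex sequence and `es` the edge sequence of a
walk in `G`. -/
inductive IsWalk (G : Multigraph) : List G.V → List G.E → Prop
  | nil (v : G.V) : IsWalk G [v] []
  | cons {v : G.V} {vs : List G.V} {es : List G.E} (u : G.V) (e : G.E)
      (he : G.ends e = s(u, v)) (hw : IsWalk G (v :: vs) es) :
      IsWalk G (u :: v :: vs) (e :: es)

/-- A path from `a` to `b` in the multigraph `G`, given by its vertex sequence `vs`
and edge sequence `es`. -/
def IsPathBetween (G : Multigraph) (a b : G.V) (vs : List G.V) (es : List G.E) : Prop :=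
  G.IsWalk vs es ∧ vs.Nodup ∧ vs.head? = some a ∧ vs.getLast? = some b

/-- A weak immersion of `H` into `G`. -/
structure WeakImmersion (H G : Multigraph) where
  vmap : H.V → G.V
  vmap_inj : Function.Injective vmap
  pverts : H.E → List G.V
  pedges : H.E → List G.E
  is_path : ∀ f : H.E, ∃ x y : H.V, H.ends f = s(x, y) ∧
    G.IsPathBetween (vmap x) (vmap y) (pverts f) (pedges f)
  edge_disjoint : ∀ f f' : H.E, f ≠ f' → ∀ e, e ∈ pedges f → e ∉ pedges f'

/-- `G.Immerses H`: `G` admits a weak immersion of `H`. -/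
def Immerses (G H : Multigraph) : Prop := Nonempty (WeakImmersion H G)

/-- The degree of a vertex: the number of edges incident with it. -/
noncomputable def degree (G : Multigraph) (v : G.V) : ℕ :=
  Nat.card {e : G.E // v ∈ G.ends e}

/-- The edge cut `δ(U)`: edges with exactly one endpoint in `U`. -/
def edgeCut (G : Multigraph) (U : Set G.V) : Set G.E :=
  {e | ∃ a b, G.ends e = s(a, b) ∧ a ∈ U ∧ b ∉ U}

/-- There exist `k` pairwise edge-disjoint paths from `a` to `b` in `G`. -/
def EdgeDisjointPaths (G : Multigraph) (a b : G.V) (k : ℕ) : Prop :=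
  ∃ (vs : Fin k → List G.V) (es : Fin k → List G.E),
    (∀ i, G.IsPathBetween a b (vs i) (es i)) ∧
    ∀ i j, i ≠ j → ∀ e, e ∈ es i → e ∉ es j

/-- Isomorphism of multigraphs. -/
structure Iso (G H : Multigraph) where
  vmap : G.V ≃ H.V
  emap : G.E ≃ H.E
  ends_map : ∀ e, H.ends (emap e) = Sym2.map vmap (G.ends e)

/-- The complete graph `K_t` as a multigraph. -/
def completeGraph (t : ℕ) : Multigraph where
  V := Fin t
  E := {p : Sym2 (Fin t) // ¬ p.IsDiag}
  finV := inferInstance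
  finE := inferInstance
  ends := Subtype.val
  no_loops := fun e => e.prop

/-- The multigraph `S_{k,n}`: vertices `x_1, …, x_n, y` (with `y = none`) and `k`
parallel edges from each `x_i` to `y`. -/
def star (k n : ℕ) : Multigraph where
  V := Option (Fin n)
  E := Fin n × Fin k
  finV := inferInstance
  finE := inferInstance
  ends := fun p => s(some p.1, none)
  no_loops := fun p => by simp [Sym2.mk_isDiag_iff]

/-! ### Edge sums -/

/-- A witness that `G` is a `k`-edge sum of `G₁` and `G₂`. -/
structure EdgeSumWitness (k : ℕ) (G G₁ G₂ : Multigraph) where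
  v₁ : G₁.V
  v₂ : G₂.V
  deg₁ : G₁.degree v₁ = k
  deg₂ : G₂.degree v₂ = k
  π : {e : G₁.E // v₁ ∈ G₁.ends e} ≃ {e : G₂.E // v₂ ∈ G₂.ends e}
  α : G.V ≃ {x : G₁.V // x ≠ v₁} ⊕ {y : G₂.V // y ≠ v₂}
  β : G.E ≃ ({e : G₁.E // v₁ ∉ G₁.ends e} ⊕ {e : G₂.E // v₂ ∉ G₂.ends e}) ⊕
      {e : G₁.E // v₁ ∈ G₁.ends e}
  ends₁ : ∀ (e : {e : G₁.E // v₁ ∉ G₁.ends e}) (x y : G₁.V) (hx : x ≠ v₁) (hy : y ≠ v₁),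
    G₁.ends e.val = s(x, y) →
      G.ends (β.symm (Sum.inl (Sum.inl e))) = s(α.symm (Sum.inl ⟨x, hx⟩), α.symm (Sum.inl ⟨y, hy⟩))
  ends₂ : ∀ (e : {e : G₂.E // v₂ ∉ G₂.ends e}) (x y : G₂.V) (hx : x ≠ v₂) (hy : y ≠ v₂),
    G₂.ends e.val = s(x, y) →
      G.ends (β.symm (Sum.inl (Sum.inr e))) = s(α.symm (Sum.inr ⟨x, hx⟩), α.symm (Sum.inr ⟨y, hy⟩))
  ends₃ : ∀ (e : {e : G₁.E // v₁ ∈ G₁.ends e}) (x : G₁.V) (y : G₂.V) (hx : x ≠ v₁) (hy : y ≠ v₂),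
    G₁.ends e.val = s(x, v₁) → G₂.ends (π e).val = s(y, v₂) →
      G.ends (β.symm (Sum.inr e)) = s(α.symm (Sum.inl ⟨x, hx⟩), α.symm (Sum.inr ⟨y, hy⟩))

/-- `G` is a `k`-edge sum of `G₁` and `G₂`. -/
def IsEdgeSum (k : ℕ) (G G₁ G₂ : Multigraph) : Prop :=
  Nonempty (EdgeSumWitness k G G₁ G₂)

/-- The edge sum is grounded. -/
def EdgeSumWitness.Grounded {k : ℕ} {G G₁ G₂ : Multigraph}
    (w : EdgeSumWitness k G G₁ G₂) : Prop :=
  (∃ v', v' ≠ w.v₁ ∧ G₁.EdgeDisjointPaths w.v₁ v' k) ∧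
  (∃ v', v' ≠ w.v₂ ∧ G₂.EdgeDisjointPaths w.v₂ v' k)

/-- `G` is a grounded `k`-edge sum of `G₁` and `G₂`. -/
def IsGroundedEdgeSum (k : ℕ) (G G₁ G₂ : Multigraph) : Prop :=
  ∃ w : EdgeSumWitness k G G₁ G₂, w.Grounded

/-! ### Auxiliary simple-graph operations -/

/-- Delete the vertex `t` from `T` (keeping it as an isolated vertex). -/
def delAt {τ : Type} (T : SimpleGraph τ) (t : τ) : SimpleGraph τ where
  Adj a b := T.Adj a b ∧ a ≠ t ∧ b ≠ t
  symm := ⟨fun a b (h : T.Adj a b ∧ a ≠ t ∧ b ≠ t) => ⟨h.1.symm, h.2.2, h.2.1⟩⟩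
  loopless := ⟨fun a (h : T.Adj a a ∧ a ≠ t ∧ a ≠ t) => T.irrefl h.1⟩

lemma reach_delAt {τ : Type} (T : SimpleGraph τ) (t : τ) {a b : τ} (q : T.Walk a b)
    (ht : t ∉ q.support) : (delAt T t).Reachable a b := by
  induction q with
  | nil => exact SimpleGraph.Reachable.refl _
  | @cons u v w h p ih =>
      simp only [SimpleGraph.Walk.support_cons, List.mem_cons] at ht
      push_neg at ht
      have hv : v ≠ t := fun hv => ht.2 (hv ▸ p.start_mem_support)
      exact (SimpleGraph.Adj.reachable (show (delAt T t).Adj u v from ⟨h, Ne.symm ht.1, hv⟩)).trans (ih ht.2)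

/-! ### Tree-cut decompositions -/

/-- A tree-cut decomposition of the multigraph `G`. -/
structure TreeCutDecomp (G : Multigraph) where
  T : Type
  finT : Finite T
  tree : SimpleGraph T
  isTree : tree.IsTree
  bag : T → Set G.V
  disj : ∀ s t : T, s ≠ t → Disjoint (bag s) (bag t)
  covers : ∀ v : G.V, ∃ t : T, v ∈ bag t

attribute [instance] TreeCutDecomp.finT

variable {G : Multigraph}

/-- The union of the bags on the `v`-side of the tree edge `uv`. -/
def TreeCutDecomp.sideSet (D : TreeCutDecomp G) (u v : D.T) : Set G.V :=
  {x | ∃ s, (D.tree.deleteEdges {s(u, v)}).Reachable v s ∧ x ∈ D.bag s}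

/-- The adhesion of a tree-cut decomposition. -/
noncomputable def TreeCutDecomp.adhesion (D : TreeCutDecomp G) : ℕ :=
  sSup {n | ∃ u v : D.T, D.tree.Adj u v ∧ n = (G.edgeCut (D.sideSet u v)).ncard}

lemma TreeCutDecomp.exists_periph (D : TreeCutDecomp G) (t : D.T) (v : G.V)
    (hv : v ∉ D.bag t) :
    ∃ u : D.T, D.tree.Adj t u ∧ ∃ s, v ∈ D.bag s ∧ (delAt D.tree t).Reachable s u := by
  classical
  obtain ⟨s, hs⟩ := D.covers v
  have hst : t ≠ s := fun h => hv (h ▸ hs)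
  obtain ⟨w⟩ := D.isTree.isConnected.preconnected t s
  obtain ⟨x, hadj, q, hq⟩ := SimpleGraph.Walk.exists_eq_cons_of_ne hst w.toPath.val
  have hP : (SimpleGraph.Walk.cons hadj q).IsPath := hq ▸ w.toPath.prop
  rw [SimpleGraph.Walk.cons_isPath_iff] at hP
  exact ⟨x, hadj, s, hs, (reach_delAt D.tree t q hP.2).symm⟩

open Classical in
/-- The map from `G` to the vertices of the torso at `t`. -/
noncomputable def TreeCutDecomp.proj (D : TreeCutDecomp G) (t : D.T) (v : G.V) :
    ↥(D.bag t) ⊕ {u : D.T // D.tree.Adj t u} :=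
  if hv : v ∈ D.bag t then Sum.inl ⟨v, hv⟩
  else Sum.inr ⟨(D.exists_periph t v hv).choose, (D.exists_periph t v hv).choose_spec.1⟩

/-- The torso of `G` at a node `t` of a tree-cut decomposition. -/
noncomputable def TreeCutDecomp.torso (D : TreeCutDecomp G) (t : D.T) : Multigraph where
  V := ↥(D.bag t) ⊕ {u : D.T // D.tree.Adj t u}
  E := {e : G.E // ¬ (Sym2.map (D.proj t) (G.ends e)).IsDiag}
  finV := inferInstance
  finE := inferInstance
  ends := fun e => Sym2.map (D.proj t) (G.ends e.val)
  no_loops := fun e => e.prop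

/-- The core vertices of the torso at `t`. -/
def TreeCutDecomp.torsoCore (D : TreeCutDecomp G) (t : D.T) : Set (D.torso t).V :=
  Set.range Sum.inl

/-! ### The 3-center and tree-cut width -/

/-- Condition (1): the immersion of `H` in `G` covers `X` and every vertex of `H`
of degree at most two is mapped into `X`. -/
def CenterCond (G : Multigraph) (X : Set G.V) (H : Multigraph) (I : WeakImmersion H G) : Prop :=
  X ⊆ Set.range I.vmap ∧ ∀ x : H.V, H.degree x ≤ 2 → I.vmap x ∈ X

/-- `C` is a 3-center of `(G, X)`: it admits an immersion in `G` satisfying (1) and is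
maximal with respect to immersion containment among all such graphs. -/
def IsThreeCenter (G : Multigraph) (X : Set G.V) (C : Multigraph) : Prop :=
  (∃ I : WeakImmersion C G, CenterCond G X C I) ∧
  ∀ H : Multigraph, (∃ I : WeakImmersion H G, CenterCond G X H I) → C.Immerses H

/-- The number of vertices of the 3-center of `(G, X)`. -/
noncomputable def threeCenterCard (G : Multigraph) (X : Set G.V) : ℕ :=
  sSup {n | ∃ C : Multigraph, IsThreeCenter G X C ∧ Nat.card C.V = n}

/-- The width of a tree-cut decomposition. -/
noncomputable def TreeCutDecomp.width (D : TreeCutDecomp G) : ℕ :=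
  max D.adhesion (sSup {n | ∃ t : D.T, n = threeCenterCard (D.torso t) (D.torsoCore t)})

/-- The tree-cut width of a multigraph. -/
noncomputable def tcw (G : Multigraph) : ℕ :=
  sInf {w | ∃ D : TreeCutDecomp G, D.width = w}

/-! ### Tree decompositions and tree-width -/

/-- A tree decomposition of the multigraph `G`. -/
structure TreeDecomp (G : Multigraph) where
  T : Type
  finT : Finite T
  tree : SimpleGraph T
  isTree : tree.IsTree
  bag : T → Set G.V
  covers_v : ∀ v : G.V, ∃ t : T, v ∈ bag t
  covers_e : ∀ e : G.E, ∃ (t : T) (x y : G.V), G.ends e = s(x, y) ∧ x ∈ bag t ∧ y ∈ bag t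
  connected : ∀ v : G.V, (SimpleGraph.induce {t : T | v ∈ bag t} tree).Connected

/-- The tree-width of a multigraph. -/
noncomputable def treewidth (G : Multigraph) : ℕ :=
  sInf {n | ∃ D : TreeDecomp G, ∀ t : D.T, (D.bag t).ncard ≤ n + 1}

/-! ### Walls and grids -/

def wallStep (r : ℕ) (a b : Fin r × Fin r) : Prop :=
  (a.1 = b.1 ∧ a.2.val + 1 = b.2.val) ∨
  (a.2 = b.2 ∧ a.1.val + 1 = b.1.val ∧ (a.1.val + 1) % 2 = (a.2.val + 1) % 2)

def wallAdj (r : ℕ) (a b : Fin r × Fin r) : Prop := wallStep r a b ∨ wallStep r b a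

lemma wallStep_ne {r : ℕ} {a b : Fin r × Fin r} (h : wallStep r a b) : a ≠ b := by
  rintro rfl
  rcases h with ⟨-, h⟩ | ⟨-, h, -⟩ <;> omega

/-- The `r`-wall `H_r`. -/
def wall (r : ℕ) : Multigraph where
  V := Fin r × Fin r
  E := {q : Sym2 (Fin r × Fin r) // ∃ a b, q = s(a, b) ∧ wallAdj r a b}
  finV := inferInstance
  finE := inferInstance
  ends := Subtype.val
  no_loops := by
    rintro ⟨q, a, b, rfl, hab⟩ hd
    rw [Sym2.mk_isDiag_iff] at hd
    subst hd
    rcases hab with h | h <;> exact wallStep_ne h rfl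

def gridStep (r : ℕ) (a b : Fin r × Fin r) : Prop :=
  (a.1 = b.1 ∧ a.2.val + 1 = b.2.val) ∨ (a.2 = b.2 ∧ a.1.val + 1 = b.1.val)

def gridAdj (r : ℕ) (a b : Fin r × Fin r) : Prop := gridStep r a b ∨ gridStep r b a

lemma gridStep_ne {r : ℕ} {a b : Fin r × Fin r} (h : gridStep r a b) : a ≠ b := by
  rintro rfl
  rcases h with ⟨-, h⟩ | ⟨-, h⟩ <;> omega

/-- The `r × r` grid. -/
def grid (r : ℕ) : Multigraph where
  V := Fin r × Fin r
  E := {q : Sym2 (Fin r × Fin r) // ∃ a b, q = s(a, b) ∧ gridAdj r a b}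
  finV := inferInstance
  finE := inferInstance
  ends := Subtype.val
  no_loops := by
    rintro ⟨q, a, b, rfl, hab⟩ hd
    rw [Sym2.mk_isDiag_iff] at hd
    subst hd
    rcases hab with h | h <;> exact gridStep_ne h rfl

/-! ### Subdivisions and minors -/

/-- `G` contains `H` as a subdivision: an immersion whose composite paths pairwise
meet only in common endpoints. -/
def ContainsSubdivision (G H : Multigraph) : Prop :=
  ∃ I : WeakImmersion H G, ∀ f f' : H.E, f ≠ f' → ∀ v : G.V,
    v ∈ I.pverts f → v ∈ I.pverts f' →
      ((I.pverts f).head? = some v ∨ (I.pverts f).getLast? = some v) ∧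
      ((I.pverts f').head? = some v ∨ (I.pverts f').getLast? = some v)

/-- A set of vertices is connected in `G`. -/
def ConnectedIn (G : Multigraph) (B : Set G.V) : Prop :=
  B.Nonempty ∧ ∀ a ∈ B, ∀ b ∈ B, ∃ (vs : List G.V) (es : List G.E),
    G.IsWalk vs es ∧ vs.head? = some a ∧ vs.getLast? = some b ∧ ∀ v ∈ vs, v ∈ B

/-- `G` contains `H` as a minor. -/
def HasMinor (G H : Multigraph) : Prop :=
  ∃ B : H.V → Set G.V,
    (∀ x, G.ConnectedIn (B x)) ∧
    (∀ x y, x ≠ y → Disjoint (B x) (B y)) ∧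
    ∃ η : H.E → G.E, Function.Injective η ∧
      ∀ (f : H.E) (x y : H.V), H.ends f = s(x, y) →
        ∃ a b, G.ends (η f) = s(a, b) ∧ a ∈ B x ∧ b ∈ B y

/-! ### Subgraphs, splitting off, suppression -/

/-- `A` is (isomorphic to) a subgraph of `G`. -/
def IsSubgraph (A G : Multigraph) : Prop :=
  ∃ (fv : A.V → G.V) (fe : A.E → G.E), Function.Injective fv ∧ Function.Injective fe ∧
    ∀ e, G.ends (fe e) = Sym2.map fv (A.ends e)

/-- `B` is obtained from `A` by splitting off a pair of incident edges. -/
def SplitOffRel (A B : Multigraph) : Prop :=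
  ∃ (e₁ e₂ : A.E) (x y z : A.V), e₁ ≠ e₂ ∧ x ≠ z ∧
    A.ends e₁ = s(x, y) ∧ A.ends e₂ = s(y, z) ∧
    ∃ (fV : A.V ≃ B.V) (fE : {e : A.E // e ≠ e₁ ∧ e ≠ e₂} ⊕ Unit ≃ B.E),
      (∀ e : {e : A.E // e ≠ e₁ ∧ e ≠ e₂},
        B.ends (fE (Sum.inl e)) = Sym2.map fV (A.ends e.val)) ∧
      B.ends (fE (Sum.inr ())) = s(fV x, fV z)

/-- `B` is obtained from `A` by suppressing a vertex of degree two (contracting one of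
its incident edges and deleting any resulting loops). -/
def SuppressTwoRel (A B : Multigraph) : Prop :=
  ∃ v : A.V, A.degree v = 2 ∧
    ∃ σ : A.V → B.V,
      (∀ x y, x ≠ v → y ≠ v → (σ x = σ y ↔ x = y)) ∧
      (∀ y : B.V, ∃ x, x ≠ v ∧ σ x = y) ∧
      (∃ a, a ≠ v ∧ (∃ e, A.ends e = s(v, a)) ∧ σ v = σ a) ∧
      ∃ τ : {e : A.E // ¬ (Sym2.map σ (A.ends e)).IsDiag} ≃ B.E,
        ∀ e, B.ends (τ e) = Sym2.map σ (A.ends e.val)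

/-- A multigraph together with a marked set of vertices. -/
structure MarkedGraph where
  G : Multigraph
  X : Set G.V

/-- One step of suppressing a vertex outside the marked set of degree at most two
(for degree zero this deletes the vertex). -/
def SuppressStep (A B : MarkedGraph) : Prop :=
  ∃ v : A.G.V, v ∉ A.X ∧ A.G.degree v ≤ 2 ∧
    ∃ σ : A.G.V → B.G.V,
      (∀ x y, x ≠ v → y ≠ v → (σ x = σ y ↔ x = y)) ∧
      (∀ y : B.G.V, ∃ x, x ≠ v ∧ σ x = y) ∧
      B.X = {y | ∃ x, x ∈ A.X ∧ σ x = y} ∧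
      (1 ≤ A.G.degree v → ∃ a, a ≠ v ∧ (∃ e, A.G.ends e = s(v, a)) ∧ σ v = σ a) ∧
      ∃ τ : {e : A.G.E // ¬ (Sym2.map σ (A.G.ends e)).IsDiag} ≃ B.G.E,
        ∀ e, B.G.ends (τ e) = Sym2.map σ (A.G.ends e.val)

/-! ### Trees and cycles as multigraphs -/

/-- A multigraph is a tree if it corresponds to a simple tree on its vertex set. -/
def IsTreeGraph (G : Multigraph) : Prop :=
  ∃ S : SimpleGraph G.V, S.IsTree ∧ ∃ φ : G.E ≃ S.edgeSet, ∀ e, (φ e : Sym2 G.V) = G.ends e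

/-- The cycle on `n + 3` vertices. -/
def cycleGraph (n : ℕ) : Multigraph where
  V := Fin (n + 3)
  E := Fin (n + 3)
  finV := inferInstance
  finE := inferInstance
  ends := fun i => s(i, i + 1)
  no_loops := by
    intro i hd
    rw [Sym2.mk_isDiag_iff] at hd
    have h1 : (i : Fin (n + 3)) + 0 = i + 1 := by simpa using hd
    have h01 : (0 : Fin (n + 3)) = 1 := add_left_cancel h1
    have := congrArg Fin.val h01
    simp [Fin.val_one] at this

/-- A matching in a multigraph: a set of pairwise vertex-disjoint edges. -/
def IsMatching (G : Multigraph) (M : Set G.E) : Prop :=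
  ∀ e ∈ M, ∀ e' ∈ M, e ≠ e' → ∀ v : G.V, v ∈ G.ends e → v ∉ G.ends e'

end Multigraph
section WallCut

open Multigraph

variable {r : ℕ}

/-- The set of unordered pairs corresponding to edges of the cut `δ(U)` in the wall. -/
def CutPairs (r : ℕ) (U : Set (Fin r × Fin r)) : Set (Sym2 (Fin r × Fin r)) :=
  {q | ∃ a b, q = s(a, b) ∧ wallAdj r a b ∧ a ∈ U ∧ b ∉ U}

lemma wallAdj_symm {a b : Fin r × Fin r} (h : wallAdj r a b) : wallAdj r b a := h.symm

lemma cutPairs_compl (U : Set (Fin r × Fin r)) : CutPairs r Uᶜ = CutPairs r U := by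
  ext q
  constructor
  · rintro ⟨a, b, rfl, hadj, ha, hb⟩
    rw [Set.mem_compl_iff, not_not] at hb
    exact ⟨b, a, Sym2.eq_swap.symm, wallAdj_symm hadj, hb, ha⟩
  · rintro ⟨a, b, rfl, hadj, ha, hb⟩
    exact ⟨b, a, Sym2.eq_swap.symm, wallAdj_symm hadj, hb, by simpa using ha⟩

lemma cutPairs_eq_image (U : Set (Fin r × Fin r)) :
    CutPairs r U = Subtype.val '' ((wall r).edgeCut U) := by
  ext q
  constructor
  · rintro ⟨a, b, rfl, hadj, ha, hb⟩
    exact ⟨⟨s(a, b), a, b, rfl, hadj⟩, ⟨a, b, rfl, ha, hb⟩, rfl⟩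
  · rintro ⟨e, ⟨a, b, he, ha, hb⟩, rfl⟩
    obtain ⟨a', b', he', hadj'⟩ := e.prop
    have hq : s(a, b) = s(a', b') := by rw [← he, ← he']; rfl
    replace hq := Sym2.eq_iff.mp hq
    have hadj : wallAdj r a b := by
      rcases hq with ⟨rfl, rfl⟩ | ⟨rfl, rfl⟩
      · exact hadj'
      · exact wallAdj_symm hadj'
    exact ⟨a, b, he, hadj, ha, hb⟩

lemma cutPairs_ncard (U : Set (Fin r × Fin r)) :
    (CutPairs r U).ncard = ((wall r).edgeCut U).ncard := by
  rw [cutPairs_eq_image]; exact Set.ncard_image_of_injective _ Subtype.val_injective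

lemma adj_horiz (i : Fin r) {j j' : Fin r} (h : j.val + 1 = j'.val) :
    wallAdj r (i, j) (i, j') := Or.inl (Or.inl ⟨rfl, h⟩)

lemma adj_vert {i i' : Fin r} (j : Fin r) (h : i.val + 1 = i'.val)
    (hp : (i.val + 1) % 2 = (j.val + 1) % 2) :
    wallAdj r (i, j) (i', j) := Or.inl (Or.inr ⟨rfl, h, hp⟩)

/-- Row `i` contains vertices of both sides. -/
def MixedRow (U : Set (Fin r × Fin r)) (i : Fin r) : Prop :=
  (∃ c, (i, c) ∈ U) ∧ (∃ c, (i, c) ∉ U)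

lemma mixedRow_compl (U : Set (Fin r × Fin r)) (i : Fin r) :
    MixedRow Uᶜ i ↔ MixedRow U i := by
  unfold MixedRow
  simp [And.comm]

/-- Membership in the pair of columns `2t, 2t+1` (the `t`-th brick column). -/
def InBrick (t : ℕ) (v : Fin r × Fin r) : Prop :=
  v.2.val = 2 * t ∨ v.2.val = 2 * t + 1

/-- From a non-constant region on an adjacency-related pair, produce a cut pair. -/
lemma step_of_no_cut {U : Set (Fin r × Fin r)} {P : Fin r × Fin r → Prop}
    (hno : ∀ a b : Fin r × Fin r, P a → P b → s(a, b) ∉ CutPairs r U)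
    {a b : Fin r × Fin r} (ha : P a) (hb : P b) (hadj : wallAdj r a b) :
    (a ∈ U ↔ b ∈ U) := by
  by_cases hA : a ∈ U
  · refine iff_of_true hA ?_
    by_contra hB
    exact hno a b ha hb ⟨a, b, rfl, hadj, hA, hB⟩
  · refine iff_of_false hA ?_
    intro hB
    exact hno b a hb ha ⟨b, a, rfl, wallAdj_symm hadj, hB, hA⟩

lemma mixedRow_cut {U : Set (Fin r × Fin r)} {i : Fin r} (h : MixedRow U i) :
    ∃ a b : Fin r × Fin r, a.1 = i ∧ b.1 = i ∧ s(a, b) ∈ CutPairs r U := by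
  by_contra hno
  push_neg at hno
  have hno' : ∀ a b : Fin r × Fin r, a.1 = i → b.1 = i → s(a, b) ∉ CutPairs r U := by
    intro a b ha hb hq
    exact hno a b ha hb hq
  have hr0 : 0 < r := i.pos
  have key : ∀ n (hn : n < r), ((i, (⟨n, hn⟩ : Fin r)) ∈ U ↔ (i, (⟨0, hr0⟩ : Fin r)) ∈ U) := by
    intro n
    induction n with
    | zero => intro hn; rfl
    | succ m ih =>
        intro hn
        have hm : m < r := by omega
        have hstep := step_of_no_cut (P := fun v => v.1 = i) hno'
          (a := (i, (⟨m, hm⟩ : Fin r))) (b := (i, (⟨m + 1, hn⟩ : Fin r))) rfl rfl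
          (adj_horiz i rfl)
        exact hstep.symm.trans (ih hm)
  obtain ⟨⟨⟨c, hc⟩, hcU⟩, ⟨⟨c', hc'⟩, hc'U⟩⟩ := h
  exact hc'U ((key c' hc').trans (key c hc).symm |>.mpr hcU)

lemma mixedBrick_cut {U : Set (Fin r × Fin r)} {t : ℕ} (h2 : 2 * t + 1 < r)
    (hmixU : ∃ v, InBrick t v ∧ v ∈ U) (hmixC : ∃ v, InBrick t v ∧ v ∉ U) :
    ∃ a b : Fin r × Fin r, InBrick t a ∧ InBrick t b ∧ s(a, b) ∈ CutPairs r U := by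
  by_contra hno
  push_neg at hno
  have hno' : ∀ a b : Fin r × Fin r, InBrick t a → InBrick t b → s(a, b) ∉ CutPairs r U := by
    intro a b ha hb hq; exact hno a b ha hb hq
  have hr0 : 0 < r := by omega
  have h2t : 2 * t < r := by omega
  set c0 : Fin r := ⟨2 * t, h2t⟩ with hc0
  set c1 : Fin r := ⟨2 * t + 1, h2⟩ with hc1
  have hb0 : ∀ i : Fin r, InBrick t (i, c0) := fun i => Or.inl rfl
  have hb1 : ∀ i : Fin r, InBrick t (i, c1) := fun i => Or.inr rfl
  have horiz : ∀ i : Fin r, ((i, c0) ∈ U ↔ (i, c1) ∈ U) := fun i =>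
    step_of_no_cut hno' (hb0 i) (hb1 i) (adj_horiz i rfl)
  have key : ∀ n (hn : n < r),
      (((⟨n, hn⟩ : Fin r), c0) ∈ U ↔ ((⟨0, hr0⟩ : Fin r), c0) ∈ U) := by
    intro n
    induction n with
    | zero => intro hn; rfl
    | succ m ih =>
        intro hn
        have hm : m < r := by omega
        have step : (((⟨m + 1, hn⟩ : Fin r), c0) ∈ U ↔ ((⟨m, hm⟩ : Fin r), c0) ∈ U) := by
          rcases Nat.even_or_odd m with he | ho
          · -- vertical edge in column c0
            have hv := step_of_no_cut hno' (hb0 ⟨m, hm⟩) (hb0 ⟨m + 1, hn⟩)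
              (adj_vert c0 rfl (by simp only [hc0, Fin.val_mk]; obtain ⟨l, rfl⟩ := he; omega))
            exact hv.symm
          · -- vertical edge in column c1
            have hv := step_of_no_cut hno' (hb1 ⟨m, hm⟩) (hb1 ⟨m + 1, hn⟩)
              (adj_vert c1 rfl (by simp only [hc1, Fin.val_mk]; obtain ⟨l, rfl⟩ := ho; omega))
            exact (horiz _).trans (hv.symm.trans (horiz _).symm)
        exact step.trans (ih hm)
  have keyAll : ∀ v : Fin r × Fin r, InBrick t v → (v ∈ U ↔ ((⟨0, hr0⟩ : Fin r), c0) ∈ U) := by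
    rintro ⟨i, c⟩ hv
    rcases hv with hv | hv
    · have : c = c0 := Fin.ext hv
      subst this
      simpa using key i.val i.isLt
    · have : c = c1 := Fin.ext hv
      subst this
      exact (horiz i).symm.trans (by simpa using key i.val i.isLt)
  obtain ⟨v, hv, hvU⟩ := hmixU
  obtain ⟨w, hw, hwU⟩ := hmixC
  exact hwU (((keyAll w hw).trans (keyAll v hv).symm).mpr hvU)

lemma ncard_Iio (n : ℕ) : (Set.Iio n).ncard = n := by
  rw [← Finset.coe_range, Set.ncard_coe_finset, Finset.card_range]

/-- The number of mixed rows is at most the number of cut pairs. -/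
lemma mixedRows_le {U : Set (Fin r × Fin r)} :
    {i : Fin r | MixedRow U i}.ncard ≤ (CutPairs r U).ncard := by
  classical
  have hsel : ∀ i : Fin r, MixedRow U i →
      ∃ p : (Fin r × Fin r) × (Fin r × Fin r),
        p.1.1 = i ∧ p.2.1 = i ∧ s(p.1, p.2) ∈ CutPairs r U := by
    intro i hi
    obtain ⟨a, b, ha, hb, hq⟩ := mixedRow_cut hi
    exact ⟨(a, b), ha, hb, hq⟩
  choose! f hf1 hf2 hf3 using hsel
  apply Set.ncard_le_ncard_of_injOn (fun i => s((f i).1, (f i).2))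
  · intro i hi; exact hf3 i hi
  · intro i hi j hj hij
    have h1 := hf1 i hi
    have h2 := hf2 i hi
    have h1' := hf1 j hj
    have h2' := hf2 j hj
    rw [Sym2.eq_iff] at hij
    rcases hij with ⟨ha, hb⟩ | ⟨ha, hb⟩
    · rw [← h1, ha, h1']
    · rw [← h1, ha, h2']

/-- Bricks all mixed : at least `r/2` cut pairs. -/
lemma bricks_le {U : Set (Fin r × Fin r)} (hr0 : 0 < r)
    (hall : ∀ t : ℕ, 2 * t + 1 < r →
      (∃ v, InBrick t v ∧ v ∈ U) ∧ (∃ v, InBrick t v ∧ v ∉ U)) :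
    r / 2 ≤ (CutPairs r U).ncard := by
  classical
  have hsel : ∀ t : ℕ, t ∈ Set.Iio (r / 2) →
      ∃ p : (Fin r × Fin r) × (Fin r × Fin r),
        InBrick t p.1 ∧ InBrick t p.2 ∧ s(p.1, p.2) ∈ CutPairs r U := by
    intro t ht
    have h2 : 2 * t + 1 < r := by
      simp only [Set.mem_Iio] at ht; omega
    obtain ⟨h1, h2'⟩ := hall t h2
    obtain ⟨a, b, ha, hb, hq⟩ := mixedBrick_cut h2 h1 h2'
    exact ⟨(a, b), ha, hb, hq⟩
  haveI : Inhabited (Fin r × Fin r) := ⟨(⟨0, hr0⟩, ⟨0, hr0⟩)⟩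
  choose! f hf1 hf2 hf3 using hsel
  rw [← ncard_Iio (r / 2)]
  apply Set.ncard_le_ncard_of_injOn (fun t => s((f t).1, (f t).2))
  · intro t ht; exact hf3 t ht
  · intro t ht u hu htu
    have h1 := hf1 t ht
    have h1' := hf1 u hu
    have h2' := hf2 u hu
    rw [Sym2.eq_iff] at htu
    rcases htu with ⟨ha, _⟩ | ⟨ha, _⟩
    · rw [ha] at h1
      rcases h1 with h | h <;> rcases h1' with h' | h' <;> omega
    · rw [ha] at h1
      rcases h1 with h | h <;> rcases h2' with h' | h' <;> omega

/-- Mixed bricks are at most the number of cut pairs. -/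
lemma mixedBricks_le {U : Set (Fin r × Fin r)} (hr0 : 0 < r) :
    {t : ℕ | 2 * t + 1 < r ∧ (∃ v, InBrick t v ∧ v ∈ U) ∧
      (∃ v : Fin r × Fin r, InBrick t v ∧ v ∉ U)}.ncard ≤ (CutPairs r U).ncard := by
  classical
  have hsel : ∀ t : ℕ, (2 * t + 1 < r ∧ (∃ v, InBrick t v ∧ v ∈ U) ∧
      (∃ v : Fin r × Fin r, InBrick t v ∧ v ∉ U)) →
      ∃ p : (Fin r × Fin r) × (Fin r × Fin r),
        InBrick t p.1 ∧ InBrick t p.2 ∧ s(p.1, p.2) ∈ CutPairs r U := by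
    rintro t ⟨h2, h1, h2'⟩
    obtain ⟨a, b, ha, hb, hq⟩ := mixedBrick_cut h2 h1 h2'
    exact ⟨(a, b), ha, hb, hq⟩
  haveI : Inhabited (Fin r × Fin r) := ⟨(⟨0, hr0⟩, ⟨0, hr0⟩)⟩
  choose! f hf1 hf2 hf3 using hsel
  apply Set.ncard_le_ncard_of_injOn (fun t => s((f t).1, (f t).2))
  · intro t ht; exact hf3 t ht
  · intro t ht u hu htu
    have h1 := hf1 t ht
    have h1' := hf1 u hu
    have h2' := hf2 u hu
    rw [Sym2.eq_iff] at htu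
    rcases htu with ⟨ha, _⟩ | ⟨ha, _⟩
    · rw [ha] at h1
      rcases h1 with h | h <;> rcases h1' with h' | h' <;> omega
    · rw [ha] at h1
      rcases h1 with h | h <;> rcases h2' with h' | h' <;> omega

lemma ncard_prod {α β : Type*} [Finite α] [Finite β] (s : Set α) (t : Set β) :
    (s ×ˢ t).ncard = s.ncard * t.ncard := by
  rw [← Nat.card_coe_set_eq, ← Nat.card_coe_set_eq, ← Nat.card_coe_set_eq,
    Nat.card_congr (Equiv.Set.prod s t), Nat.card_prod]

/-- Main one-sided lemma: if every pure row is fully in `U` then no `B ⊆ Uᶜ`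
of size `2k²` exists. -/
lemma main_side (k : ℕ) (hk : 1 ≤ k) (hr : 2 * k + 1 ≤ r)
    (U : Set (Fin r × Fin r)) (hcut : (CutPairs r U).ncard < k)
    (hpure : ∀ i : Fin r, ¬ MixedRow U i → ∀ c, (i, c) ∈ U)
    (B : Set (Fin r × Fin r)) (hB : B ⊆ Uᶜ) (hcB : B.ncard = 2 * k ^ 2) : False := by
  classical
  have hr0 : 0 < r := by omega
  -- there is a pure row i₀
  have hRlt : {i : Fin r | MixedRow U i}.ncard < k := lt_of_le_of_lt mixedRows_le hcut
  have hne : {i : Fin r | MixedRow U i} ≠ Set.univ := by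
    intro h
    rw [h, Set.ncard_univ, Nat.card_eq_fintype_card, Fintype.card_fin] at hRlt
    omega
  obtain ⟨i₀, hi₀⟩ : ∃ i : Fin r, ¬ MixedRow U i := by
    by_contra h
    push_neg at h
    exact hne (Set.eq_univ_of_forall h)
  have hi₀U : ∀ c, (i₀, c) ∈ U := hpure i₀ hi₀
  set R := {i : Fin r | MixedRow U i} with hR
  set Tm := {t : ℕ | 2 * t + 1 < r ∧ (∃ v, InBrick t v ∧ v ∈ U) ∧
      (∃ v : Fin r × Fin r, InBrick t v ∧ v ∉ U)} with hTm
  have hTmlt : Tm.ncard < k := lt_of_le_of_lt (mixedBricks_le hr0) hcut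
  set Cols := {c : Fin r | c.val = r - 1 ∨ c.val / 2 ∈ Tm} with hCols
  -- B ⊆ R ×ˢ Cols
  have hsub : B ⊆ R ×ˢ Cols := by
    intro v hv
    have hvC : v ∉ U := hB hv
    constructor
    · -- the row of v is mixed
      by_contra hmix
      exact hvC (by
        have := hpure v.1 hmix v.2
        simpa using this)
    · -- column condition
      by_cases h2 : 2 * (v.2.val / 2) + 1 < r
      · right
        refine ⟨h2, ⟨(i₀, ⟨2 * (v.2.val / 2), by omega⟩), Or.inl rfl, hi₀U _⟩,
          ⟨v, ?_, hvC⟩⟩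
        have := v.2.isLt
        unfold InBrick
        omega
      · left
        have := v.2.isLt
        omega
  have hfin : (R ×ˢ Cols).Finite := Set.toFinite _
  have hle : B.ncard ≤ (R ×ˢ Cols).ncard := Set.ncard_le_ncard hsub hfin
  rw [ncard_prod] at hle
  -- bound Cols
  have hColsle : Cols.ncard ≤ 2 * (k - 1) + 1 := by
    have hsplit : Cols ⊆ {c : Fin r | c.val % 2 = 0 ∧ c.val / 2 ∈ Tm} ∪
        ({c : Fin r | c.val % 2 = 1 ∧ c.val / 2 ∈ Tm} ∪ {c : Fin r | c.val = r - 1}) := by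
      intro c hc
      rcases hc with h | h
      · right; right; exact h
      · rcases Nat.even_or_odd c.val with ⟨l, hl⟩ | ⟨l, hl⟩
        · left; exact ⟨by omega, h⟩
        · right; left; exact ⟨by omega, h⟩
    have h0 : {c : Fin r | c.val = r - 1}.ncard ≤ 1 := by
      have hsub1 : {c : Fin r | c.val = r - 1} ⊆ {(⟨r - 1, by omega⟩ : Fin r)} := by
        intro c hc
        simp only [Set.mem_setOf_eq] at hc
        simp only [Set.mem_singleton_iff]
        exact Fin.ext hc
      calc {c : Fin r | c.val = r - 1}.ncard
          ≤ ({(⟨r - 1, by omega⟩ : Fin r)} : Set (Fin r)).ncard :=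
            Set.ncard_le_ncard hsub1 (Set.toFinite _)
        _ = 1 := Set.ncard_singleton _
    have hTmfin : Tm.Finite := by
      refine Set.Finite.subset (Set.finite_Iio (r / 2)) ?_
      intro t ht
      simp only [hTm, Set.mem_setOf_eq] at ht
      simp only [Set.mem_Iio]
      omega
    have he : {c : Fin r | c.val % 2 = 0 ∧ c.val / 2 ∈ Tm}.ncard ≤ Tm.ncard := by
      refine Set.ncard_le_ncard_of_injOn (fun c => c.val / 2) ?_ ?_ hTmfin
      · intro c hc; exact hc.2
      · intro c hc d hd hcd
        simp only [Set.mem_setOf_eq] at hc hd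
        have hcd' : c.val / 2 = d.val / 2 := hcd
        exact Fin.ext (by omega)
    have ho : {c : Fin r | c.val % 2 = 1 ∧ c.val / 2 ∈ Tm}.ncard ≤ Tm.ncard := by
      refine Set.ncard_le_ncard_of_injOn (fun c => c.val / 2) ?_ ?_ hTmfin
      · intro c hc; exact hc.2
      · intro c hc d hd hcd
        simp only [Set.mem_setOf_eq] at hc hd
        have hcd' : c.val / 2 = d.val / 2 := hcd
        exact Fin.ext (by omega)
    calc Cols.ncard ≤ ({c : Fin r | c.val % 2 = 0 ∧ c.val / 2 ∈ Tm} ∪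
        ({c : Fin r | c.val % 2 = 1 ∧ c.val / 2 ∈ Tm} ∪ {c : Fin r | c.val = r - 1})).ncard :=
          Set.ncard_le_ncard hsplit (Set.toFinite _)
      _ ≤ _ := by
          refine le_trans (Set.ncard_union_le _ _) ?_
          refine le_trans (add_le_add he (Set.ncard_union_le _ _)) ?_
          have := add_le_add ho h0
          omega
  have hRle : R.ncard ≤ k - 1 := by omega
  have hColsle' : Cols.ncard ≤ 2 * (k - 1) + 1 := hColsle
  have hfinal : 2 * k ^ 2 ≤ (k - 1) * (2 * (k - 1) + 1) := by
    rw [← hcB]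
    exact le_trans hle (Nat.mul_le_mul hRle hColsle')
  obtain ⟨m, rfl⟩ : ∃ m, k = m + 1 := ⟨k - 1, by omega⟩
  simp only [Nat.add_sub_cancel] at hfinal
  nlinarith [hfinal]

end WallCut
open Multigraph in
/-- in the `r`-wall with `r ≥ 2k+1`, two sets of `2k²` degree-3
vertices cannot be separated by an edge cut of order less than `k`. -/
theorem wall_no_small_cut (k r : ℕ) (hk : 1 ≤ k) (hr : 2 * k + 1 ≤ r)
    (A₁ A₂ : Set (wall r).V)
    (h₁ : ∀ v ∈ A₁, (wall r).degree v = 3) (h₂ : ∀ v ∈ A₂, (wall r).degree v = 3)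
    (hc₁ : A₁.ncard = 2 * k ^ 2) (hc₂ : A₂.ncard = 2 * k ^ 2) :
    ¬ ∃ U : Set (wall r).V, A₁ ⊆ U ∧ A₂ ⊆ Uᶜ ∧ ((wall r).edgeCut U).ncard < k := by
  rintro ⟨U, hA1, hA2, hlt⟩
  have hcut : (CutPairs r U).ncard < k := by
    exact lt_of_eq_of_lt (cutPairs_ncard U) hlt
  by_cases hA : ∃ i : Fin r, ∀ c, ((i, c) : Fin r × Fin r) ∈ U
  · by_cases hBc : ∃ i : Fin r, ∀ c, ((i, c) : Fin r × Fin r) ∉ U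
    · -- every brick is mixed : too many cut pairs
      obtain ⟨i₁, h1⟩ := hA
      obtain ⟨i₂, h2⟩ := hBc
      have hall : ∀ t : ℕ, 2 * t + 1 < r →
          (∃ v, InBrick t v ∧ v ∈ U) ∧ (∃ v : Fin r × Fin r, InBrick t v ∧ v ∉ U) := by
        intro t ht
        exact ⟨⟨((i₁, ⟨2 * t, by omega⟩) : Fin r × Fin r), Or.inl rfl, h1 _⟩,
          ⟨((i₂, ⟨2 * t, by omega⟩) : Fin r × Fin r), Or.inl rfl, h2 _⟩⟩
      have hb := bricks_le (by omega) hall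
      omega
    · -- all pure rows are in U
      refine main_side k hk hr U hcut ?_ A₂ hA2 hc₂
      intro i hmix c
      rcases not_and_or.mp hmix with h | h
      · exfalso
        push_neg at h
        exact hBc ⟨i, h⟩
      · push_neg at h
        exact h c
  · -- no all-U row: all pure rows are in Uᶜ
    have hcut' : (CutPairs r Uᶜ).ncard < k := by
      exact lt_of_eq_of_lt (congrArg Set.ncard (cutPairs_compl U)) hcut
    refine main_side k hk hr Uᶜ hcut' ?_ A₁ (by intro x hx; exact not_not.mpr (hA1 hx)) hc₁
    intro i hmix c
    replace hmix := mt (mixedRow_compl U i).mpr hmix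
    rcases not_and_or.mp hmix with h | h
    · push_neg at h
      exact h c
    · exfalso
      push_neg at h
      exact hA ⟨i, h⟩
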